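/- In the setting of Theorem 3.23 (the double Legendre transform): with good data (Σ̃', h̃) for (Σ', h), define ∇̃, ∇̃' as above, the dual function h̃̌(m,l) = -inf{⟨(m,l),(n,l')⟩ | (n,l') ∈ ∇̃ + ∇̃'} on the normal fan of ∇̃ + ∇̃', h̃̌' = h̃̌ - φ̃̌, and Δ̃' = {(m,l) | m ∈ Δ^{h'}, l ≥ h̃̌'(m,1)}. Then for every (n,l) in the support of Σ̃', h̃'(n,l) = -inf{⟨(m,l'),(n,l)⟩ | (m,l') ∈ Δ̃'}; i.e., the transform applied twice recovers h̃'. -/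

import Mathlib

open scoped Pointwise

namespace BB

abbrev V (n : ℕ) : Type := Fin n → ℝ

/-- The standard pairing between `M_ℝ` and `N_ℝ` (both identified with `ℝⁿ`). -/
def pair {n : ℕ} (m v : V n) : ℝ := ∑ i, m i * v i

/-- A point of `ℝⁿ` is a lattice point if all its coordinates are integers. -/
def IsLatticePt {n : ℕ} (m : V n) : Prop := ∀ i, ∃ z : ℤ, m i = (z : ℝ)

/-- A lattice polytope: convex hull of finitely many lattice points. -/
def IsLatticePolytope {n : ℕ} (P : Set (V n)) : Prop :=
  ∃ S : Finset (V n), (∀ m ∈ S, IsLatticePt m) ∧ P = convexHull ℝ (S : Set (V n))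

/-- The polar dual `P* = {v | ⟨m,v⟩ ≥ -1 for all m ∈ P}`. -/
def polar {n : ℕ} (P : Set (V n)) : Set (V n) := {v | ∀ m ∈ P, -1 ≤ pair m v}

/-- A reflexive polytope: a lattice polytope with `0` in its interior whose polar
dual is again a lattice polytope. -/
def IsReflexive {n : ℕ} (P : Set (V n)) : Prop :=
  IsLatticePolytope P ∧ (0 : V n) ∈ interior P ∧ IsLatticePolytope (polar P)

/-- The support function `supp P v = -inf{⟨m,v⟩ | m ∈ P}`; for `P = Δᵢ` and `v ∈ N_ℝ`
this is the piecewise linear function `φᵢ(v)` of the nef-partition. -/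
noncomputable def supp {n : ℕ} (P : Set (V n)) (v : V n) : ℝ :=
  sSup ((fun m => -(pair m v)) '' P)

end BB


namespace BB

/-- The pairing on `(M_ℝ ⊕ ℝ) × (N_ℝ ⊕ ℝ)`. -/
def pairP {n : ℕ} (p q : V n × ℝ) : ℝ := pair p.1 q.1 + p.2 * q.2

/-- The cone over a set, with vertex the origin. -/
def cone0 {E : Type*} [AddCommMonoid E] [Module ℝ E] (S : Set E) : Set E :=
  {x | ∃ c : ℝ, 0 ≤ c ∧ ∃ s ∈ S, x = c • s}

/-- The support function `-inf{⟨q,p⟩ | q ∈ P}` on `M_ℝ × ℝ` (resp. `N_ℝ × ℝ`). -/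
noncomputable def suppP {n : ℕ} (P : Set (V n × ℝ)) (p : V n × ℝ) : ℝ :=
  sSup ((fun q => -(pairP q p)) '' P)

/-- A good subdivision `Σ̃'` of `Σ̃` (Definition 3.14). -/
def IsGoodSubdiv {n : ℕ} (Δ Q : Set (V n)) (CC : Finset (Set (V n × ℝ))) : Prop :=
  (∀ p : V n × ℝ, 0 ≤ p.2 → ∃ c ∈ CC, p ∈ c) ∧
  (∀ c ∈ CC, Convex ℝ c ∧ ∀ t : ℝ, 0 ≤ t → ∀ x ∈ c, t • x ∈ c) ∧
  (∀ c ∈ CC, ∃ σ τ : Set (V n), σ ⊆ frontier (polar Δ) ∧ τ ⊆ Q ∧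
      c = (cone0 (σ ×ˢ ({0} : Set ℝ)) ∪ {0})
        + (cone0 (τ ×ˢ ({1} : Set ℝ)) ∪ {0}))

section Aux

variable {n : ℕ}

lemma pair_comm (a b : V n) : pair a b = pair b a :=
  Finset.sum_congr rfl fun i _ => mul_comm _ _

lemma pair_add_left (a b v : V n) : pair (a + b) v = pair a v + pair b v := by
  simp only [pair, ← Finset.sum_add_distrib]
  exact Finset.sum_congr rfl fun i _ => by simp [add_mul]

lemma pair_add_right (a b v : V n) : pair v (a + b) = pair v a + pair v b := by
  rw [pair_comm, pair_add_left, pair_comm a v, pair_comm b v]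

lemma pair_neg_left (a v : V n) : pair (-a) v = -pair a v := by
  simp [pair, ← Finset.sum_neg_distrib]

lemma pair_neg_right (a v : V n) : pair a (-v) = -pair a v := by
  rw [pair_comm, pair_neg_left, pair_comm]

lemma pair_zero_left (v : V n) : pair 0 v = 0 := by simp [pair]

lemma pair_zero_right (v : V n) : pair v 0 = 0 := by simp [pair]

lemma pair_smul_right (c : ℝ) (a v : V n) : pair a (c • v) = c * pair a v := by
  simp only [pair, Pi.smul_apply, smul_eq_mul, Finset.mul_sum]
  exact Finset.sum_congr rfl fun i _ => by ring

lemma pair_single_right (a : V n) (i : Fin n) : pair a (Pi.single i 1) = a i := by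
  simp only [pair]
  rw [Finset.sum_eq_single i]
  · simp
  · intro j _ hj; simp [Pi.single_apply, hj]
  · intro h; exact absurd (Finset.mem_univ i) h

lemma pair_single_left (a : V n) (i : Fin n) : pair (Pi.single i 1) a = a i := by
  rw [pair_comm, pair_single_right]

lemma single_eq_smul (i : Fin n) (c : ℝ) :
    (Pi.single i c : V n) = c • (Pi.single i 1 : V n) := by
  funext j; by_cases h : j = i <;> simp [Pi.single_apply, h]

lemma abs_pair_le (m y : V n) : |pair m y| ≤ ∑ i, |m i| * |y i| := by
  refine (Finset.abs_sum_le_sum_abs _ _).trans ?_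
  exact le_of_eq (Finset.sum_congr rfl fun i _ => abs_mul _ _)

lemma pairP_add_left (a b q : V n × ℝ) : pairP (a + b) q = pairP a q + pairP b q := by
  simp only [pairP, Prod.fst_add, Prod.snd_add, pair_add_left]; ring

lemma pairP_mk (a : V n) (b : ℝ) (q : V n × ℝ) :
    pairP (a, b) q = pair a q.1 + b * q.2 := rfl

end Aux

theorem stmt17 {n r : ℕ} (Δ : Set (V n)) (D : Fin r → Set (V n))
    (hΔrefl : IsReflexive Δ)
    (hDlat : ∀ i, IsLatticePolytope (D i))
    (hΔ : Δ = ∑ i, D i)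
    (E : Finset (V n))
    (hE : (E : Set (V n)) = Set.extremePoints ℝ (polar Δ))
    (hnef : ∀ i, ∀ e ∈ E, supp (D i) e = 0 ∨ supp (D i) e = 1)
    (Nb : Fin r → Set (V n))
    (hNb : ∀ i, Nb i = convexHull ℝ ({0} ∪ {e : V n | e ∈ E ∧ supp (D i) e = 1}))
    -- ȟ' = ȟ - φ̌ convex positively homogeneous with Newton polytope Q = ∇^{ȟ'}
    (hk : V n → ℝ)
    (hkconv : ConvexOn ℝ Set.univ hk)
    (hkhom : ∀ c : ℝ, 0 ≤ c → ∀ x, hk (c • x) = c * hk x)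
    (Q : Set (V n)) (hQ : Q = {v : V n | ∀ m, -(hk m) ≤ pair m v})
    (hksupp : ∀ m, hk m = supp Q m)
    -- h' = h - φ convex positively homogeneous, with Newton polytope Δ^{h'}
    (h' : V n → ℝ)
    (h'conv : ConvexOn ℝ Set.univ h')
    (h'hom : ∀ c : ℝ, 0 ≤ c → ∀ x, h' (c • x) = c * h' x)
    (Dh' : Set (V n)) (hDh' : Dh' = {m : V n | ∀ x, -(h' x) ≤ pair m x})
    -- the good pair (Σ̃', h̃) for (Σ', h), with h̃' = h̃ - φ̃
    (CC : Finset (Set (V n × ℝ)))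
    (hgood : IsGoodSubdiv Δ Q CC)
    (ht' : V n × ℝ → ℝ)
    (htconv : ConvexOn ℝ {p : V n × ℝ | 0 ≤ p.2} ht')
    (hthom : ∀ c : ℝ, 0 ≤ c → ∀ p : V n × ℝ, 0 ≤ p.2 → ht' (c • p) = c * ht' p)
    (htrest : ∀ x, ht' (x, 0) = h' x)
    (htlin : ∀ c ∈ CC, ∃ w : V n × ℝ, ∀ p ∈ c, ht' p = pairP p w)
    -- ∇̃ = {(n,l) | n ∈ ∇, l ≥ h'(n)} and ∇̃' = {(n,l) | n ∈ ∇^{ȟ'}, l ≥ h̃'(n,1)}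
    (Ntil Ntil' : Set (V n × ℝ))
    (hNtil : Ntil = {p : V n × ℝ | p.1 ∈ (∑ i, Nb i) ∧ h' p.1 ≤ p.2})
    (hNtil' : Ntil' = {p : V n × ℝ | p.1 ∈ Q ∧ ht' (p.1, 1) ≤ p.2})
    -- the dual function h̃̌(m,l) = -inf{⟨(m,l),(n,l')⟩ | (n,l') ∈ ∇̃ + ∇̃'},
    -- and h̃̌' = h̃̌ - φ̃̌, where φ̃̌ is the support function of ∇̃
    (htc htc' : V n × ℝ → ℝ)
    (hhtc : ∀ q, htc q = suppP (Ntil + Ntil') q)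
    (hhtc' : ∀ q, htc' q = htc q - suppP Ntil q)
    -- Δ̃' = {(m,l) | m ∈ Δ^{h'}, l ≥ h̃̌'(m,1)}
    (Δt' : Set (V n × ℝ))
    (hΔt' : Δt' = {p : V n × ℝ | p.1 ∈ Dh' ∧ htc' (p.1, 1) ≤ p.2}) :
    -- the transform applied twice recovers h̃' on the support of Σ̃'
    ∀ p : V n × ℝ, 0 ≤ p.2 → ht' p = suppP Δt' p := by
  classical
  intro p hp2
  -- basic zero values
  have h'zero : h' 0 = 0 := by
    have := h'hom 0 le_rfl 0; simpa using this
  have hkzero : hk 0 = 0 := by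
    have := hkhom 0 le_rfl 0; simpa using this
  have htzero : ht' 0 = 0 := by
    have := hthom 0 le_rfl 0 le_rfl; simpa using this
  have hDmem : ∀ m' ∈ Dh', ∀ x, -(h' x) ≤ pair m' x := by
    intro m' hm' x; rw [hDh'] at hm'; exact hm' x
  -- subadditivity of h' and hk
  have h'subadd : ∀ x y : V n, h' (x + y) ≤ h' x + h' y := by
    intro x y
    have h2 := h'conv.2 (Set.mem_univ x) (Set.mem_univ y)
      (by norm_num : (0:ℝ) ≤ 1/2) (by norm_num : (0:ℝ) ≤ 1/2) (by norm_num)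
    have hh : h' ((1/2 : ℝ) • (x + y)) = (1/2) * h' (x + y) := h'hom _ (by norm_num) _
    rw [smul_add] at hh
    rw [hh] at h2
    simp only [smul_eq_mul] at h2
    linarith
  have hksubadd : ∀ x y : V n, hk (x + y) ≤ hk x + hk y := by
    intro x y
    have h2 := hkconv.2 (Set.mem_univ x) (Set.mem_univ y)
      (by norm_num : (0:ℝ) ≤ 1/2) (by norm_num : (0:ℝ) ≤ 1/2) (by norm_num)
    have hh : hk ((1/2 : ℝ) • (x + y)) = (1/2) * hk (x + y) := hkhom _ (by norm_num) _
    rw [smul_add] at hh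
    rw [hh] at h2
    simp only [smul_eq_mul] at h2
    linarith
  have htsubadd : ∀ a b : V n × ℝ, 0 ≤ a.2 → 0 ≤ b.2 → ht' (a + b) ≤ ht' a + ht' b := by
    intro a b ha hb
    have h2 := htconv.2 (show a ∈ {p : V n × ℝ | 0 ≤ p.2} from ha)
      (show b ∈ {p : V n × ℝ | 0 ≤ p.2} from hb)
      (by norm_num : (0:ℝ) ≤ 1/2) (by norm_num : (0:ℝ) ≤ 1/2) (by norm_num)
    have hab2 : (0:ℝ) ≤ (a + b).2 := by
      have : (a + b).2 = a.2 + b.2 := rfl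
      rw [this]; linarith
    have hh : ht' ((1/2 : ℝ) • (a + b)) = (1/2) * ht' (a + b) :=
      hthom _ (by norm_num) _ hab2
    rw [smul_add] at hh
    rw [hh] at h2
    simp only [smul_eq_mul] at h2
    linarith
  -- coordinatewise bound for h'
  have h'sum : ∀ y : V n, h' y ≤ ∑ i, h' (Pi.single i (y i)) := by
    intro y
    have := Finset.le_sum_of_subadditive h' h'zero.le h'subadd Finset.univ
      (fun i => (Pi.single i (y i) : V n))
    rwa [Finset.univ_sum_single] at this
  obtain ⟨B, hB⟩ : ∃ B : Fin n → ℝ,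
      ∀ i, B i = max (h' (Pi.single i 1)) (h' (-Pi.single i 1)) := ⟨_, fun _ => rfl⟩
  have hB0 : ∀ i, 0 ≤ B i := by
    intro i
    have hs := h'subadd (Pi.single i 1) (-Pi.single i 1)
    rw [add_neg_cancel, h'zero] at hs
    have h1 := le_max_left (h' (Pi.single i 1)) (h' (-Pi.single i 1))
    have h2 := le_max_right (h' (Pi.single i 1)) (h' (-Pi.single i 1))
    rw [hB i]
    linarith
  have h'le : ∀ y : V n, h' y ≤ ∑ i, |y i| * B i := by
    intro y
    refine (h'sum y).trans (Finset.sum_le_sum ?_)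
    intro i _
    rw [hB i]
    rcases le_or_gt 0 (y i) with hy | hy
    · rw [single_eq_smul i (y i), h'hom _ hy, abs_of_nonneg hy]
      exact mul_le_mul_of_nonneg_left (le_max_left _ _) hy
    · have h1 : (Pi.single i (y i) : V n) = (-(y i)) • (-(Pi.single i 1 : V n)) := by
        rw [smul_neg, ← single_eq_smul, ← Pi.single_neg, neg_neg]
      rw [h1, h'hom _ (by linarith), abs_of_neg hy]
      exact mul_le_mul_of_nonneg_left (le_max_right _ _) (by linarith)
  have hDbox : ∀ m' ∈ Dh', ∀ i, |m' i| ≤ B i := by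
    intro m' hm' i
    have h1 := hDmem m' hm' (Pi.single i 1)
    have h2 := hDmem m' hm' (-Pi.single i 1)
    rw [pair_single_right] at h1
    rw [pair_neg_right, pair_single_right] at h2
    have h3 := le_max_left (h' (Pi.single i 1)) (h' (-Pi.single i 1))
    have h4 := le_max_right (h' (Pi.single i 1)) (h' (-Pi.single i 1))
    refine abs_le.mpr ⟨?_, ?_⟩
    · rw [hB i]; linarith
    · rw [hB i]; linarith
  have hpairD : ∀ m' ∈ Dh', ∀ y : V n, |pair m' y| ≤ ∑ i, |y i| * B i := by
    intro m' hm' y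
    refine (abs_pair_le m' y).trans (Finset.sum_le_sum fun i _ => ?_)
    calc |m' i| * |y i| ≤ B i * |y i| :=
          mul_le_mul_of_nonneg_right (hDbox m' hm' i) (abs_nonneg _)
      _ = |y i| * B i := mul_comm _ _
  -- box bound for Q
  obtain ⟨R, hR⟩ : ∃ R : Fin n → ℝ,
      ∀ i, R i = max (hk (Pi.single i 1)) (hk (-Pi.single i 1)) := ⟨_, fun _ => rfl⟩
  have hR0 : ∀ i, 0 ≤ R i := by
    intro i
    have hs := hksubadd (Pi.single i 1) (-Pi.single i 1)
    rw [add_neg_cancel, hkzero] at hs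
    have h1 := le_max_left (hk (Pi.single i 1)) (hk (-Pi.single i 1))
    have h2 := le_max_right (hk (Pi.single i 1)) (hk (-Pi.single i 1))
    rw [hR i]
    linarith
  have hQbox : ∀ q ∈ Q, ∀ i, |q i| ≤ R i := by
    intro q hq i
    rw [hQ] at hq
    have h1 := hq (Pi.single i 1)
    have h2 := hq (-Pi.single i 1)
    rw [pair_single_left] at h1
    rw [pair_neg_left, pair_single_left] at h2
    have h3 := le_max_left (hk (Pi.single i 1)) (hk (-Pi.single i 1))
    have h4 := le_max_right (hk (Pi.single i 1)) (hk (-Pi.single i 1))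
    refine abs_le.mpr ⟨?_, ?_⟩
    · rw [hR i]; linarith
    · rw [hR i]; linarith
  obtain ⟨SRB, hSRB⟩ : ∃ x : ℝ, x = ∑ i, R i * B i := ⟨_, rfl⟩
  have hboxsum : ∀ y : V n, (∀ i, |y i| ≤ R i) → (∑ i, |y i| * B i) ≤ SRB := by
    intro y hy
    rw [hSRB]
    refine Finset.sum_le_sum fun i _ => mul_le_mul_of_nonneg_right (hy i) (hB0 i)
  have h'Q : ∀ q ∈ Q, h' q ≤ SRB ∧ h' (-q) ≤ SRB := by
    intro q hq
    constructor
    · exact (h'le q).trans (hboxsum q (hQbox q hq))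
    · refine (h'le (-q)).trans (hboxsum (-q) ?_)
      intro i
      have : |(-q) i| = |q i| := by simp
      rw [this]; exact hQbox q hq i
  have hpairQ : ∀ m' ∈ Dh', ∀ q ∈ Q, |pair m' q| ≤ SRB := by
    intro m' hm' q hq
    exact (hpairD m' hm' q).trans (hboxsum q (hQbox q hq))
  -- Q is nonempty
  have hQne : Q.Nonempty := by
    by_contra hQe
    rw [Set.not_nonempty_iff_eq_empty] at hQe
    have h0 : (0 : V n) ∈ Q := by
      rw [hQ]
      intro m
      have hm0 : hk m = 0 := by
        rw [hksupp m, supp, hQe, Set.image_empty, Real.sSup_empty]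
      rw [hm0, pair_zero_right]
      norm_num
    rw [hQe] at h0
    exact absurd h0 (Set.notMem_empty 0)
  obtain ⟨n₀, hn₀⟩ := hQne
  -- the decomposition coming from the good subdivision
  have decomp : ∀ u : V n, ∃ z q, q ∈ Q ∧ u = z + q ∧
      ht' (u, 1) = h' z + ht' (q, 1) := by
    intro u
    obtain ⟨c, hcCC, hcmem⟩ := hgood.1 (u, 1) (by norm_num)
    obtain ⟨σ, τ, hσ, hτ, hceq⟩ := hgood.2.2 c hcCC
    obtain ⟨wc, hwc⟩ := htlin c hcCC
    have hcmem' := hcmem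
    rw [hceq, Set.mem_add] at hcmem'
    obtain ⟨a, ha, b, hb, hab⟩ := hcmem'
    have ha2 : a.2 = 0 := by
      rcases ha with ha | ha
      · obtain ⟨c₁, hc₁, s, hs, rfl⟩ := ha
        have hs2 : s.2 = 0 := (Set.mem_prod.mp hs).2
        show c₁ * s.2 = 0
        rw [hs2, mul_zero]
      · rw [Set.mem_singleton_iff.mp ha]; rfl
    have hab2 : a.2 + b.2 = 1 := congrArg Prod.snd hab
    have hb2 : b.2 = 1 := by rw [ha2] at hab2; linarith
    have hb' : ∃ q ∈ τ, b = (q, 1) := by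
      rcases hb with hb | hb
      · obtain ⟨c₂, hc₂, s, hs, rfl⟩ := hb
        obtain ⟨hs1, hs2⟩ := Set.mem_prod.mp hs
        have hs2' : s.2 = 1 := hs2
        have hc2v : c₂ * s.2 = 1 := hb2
        rw [hs2', mul_one] at hc2v
        refine ⟨s.1, hs1, ?_⟩
        have : (c₂ • s) = ((c₂ • s.1 : V n), c₂ * s.2) := rfl
        rw [this, hc2v, hs2', mul_one, one_smul]
      · exfalso
        rw [Set.mem_singleton_iff.mp hb] at hb2
        simp at hb2
    obtain ⟨q, hqτ, rfl⟩ := hb'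
    have haC : a ∈ c := by
      have h0B : (0 : V n × ℝ) ∈ cone0 (τ ×ˢ ({1} : Set ℝ)) ∪ {0} := Or.inr rfl
      have := Set.add_mem_add ha h0B
      rw [add_zero] at this
      rw [hceq]; exact this
    have hbC : ((q, 1) : V n × ℝ) ∈ c := by
      have h0A : (0 : V n × ℝ) ∈ cone0 (σ ×ˢ ({0} : Set ℝ)) ∪ {0} := Or.inr rfl
      have := Set.add_mem_add h0A hb
      rw [zero_add] at this
      rw [hceq]; exact this
    refine ⟨a.1, q, hτ hqτ, ?_, ?_⟩
    · have h1 : a.1 + q = u := congrArg Prod.fst hab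
      exact h1.symm
    · have h1 : ht' (u, 1) = pairP (u, 1) wc := hwc _ hcmem
      have h2 : ht' a = pairP a wc := hwc _ haC
      have h3 : ht' (q, 1) = pairP (q, 1) wc := hwc _ hbC
      have h4 : pairP ((u, 1) : V n × ℝ) wc = pairP a wc + pairP ((q, 1) : V n × ℝ) wc := by
        rw [← hab, pairP_add_left]
      have h5 : ht' a = h' a.1 := by
        have ha' : a = (a.1, 0) := by
          rw [← ha2]
        rw [ha', htrest]
      rw [h1, h4, ← h2, ← h3, h5]
  -- lower bound for ht'(·,1)
  obtain ⟨C, hC⟩ : ∃ x : ℝ, x = ht' ((0 : V n), (1 : ℝ)) := ⟨_, rfl⟩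
  have g1lower : ∀ q : V n, C - h' (-q) ≤ ht' (q, 1) := by
    intro q
    have hmid := htconv.2
      (show ((q, 1) : V n × ℝ) ∈ {p : V n × ℝ | 0 ≤ p.2} from by norm_num)
      (show ((-q, 1) : V n × ℝ) ∈ {p : V n × ℝ | 0 ≤ p.2} from by norm_num)
      (by norm_num : (0:ℝ) ≤ 1/2) (by norm_num : (0:ℝ) ≤ 1/2) (by norm_num)
    have hpt : (1/2 : ℝ) • ((q, 1) : V n × ℝ) + (1/2 : ℝ) • ((-q, 1) : V n × ℝ)
        = ((0 : V n), (1 : ℝ)) := by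
      refine Prod.ext_iff.mpr ⟨?_, ?_⟩
      · show (1/2 : ℝ) • q + (1/2 : ℝ) • (-q) = 0
        rw [smul_neg]; abel
      · show (1/2 : ℝ) * 1 + (1/2 : ℝ) * 1 = 1
        norm_num
    rw [hpt] at hmid
    simp only [smul_eq_mul] at hmid
    have hsub : ht' (-q, 1) ≤ h' (-q) + C := by
      have hadd := htsubadd ((-q, 0) : V n × ℝ) (((0 : V n), (1 : ℝ)) : V n × ℝ)
        le_rfl (by norm_num)
      have heq : ((-q, 0) : V n × ℝ) + (((0 : V n), (1 : ℝ)) : V n × ℝ) = (-q, 1) := by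
        refine Prod.ext_iff.mpr ⟨?_, ?_⟩
        · show -q + 0 = -q; rw [add_zero]
        · show (0 : ℝ) + 1 = 1; norm_num
      rw [heq, htrest] at hadd
      rw [hC]
      exact hadd
    linarith
  obtain ⟨K, hK⟩ : ∃ x : ℝ, x = 2 * SRB - C := ⟨_, rfl⟩
  have Kbound : ∀ u : V n, h' u - ht' (u, 1) ≤ K := by
    intro u
    obtain ⟨z, q, hqQ, huzq, heq⟩ := decomp u
    have h1 : h' u ≤ h' z + h' q := by rw [huzq]; exact h'subadd z q
    have h2 := (h'Q q hqQ).1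
    have h3 := (h'Q q hqQ).2
    have h4 := g1lower q
    rw [heq]
    rw [hK]
    linarith
  have Kkey : ∀ (x : V n) (t : ℝ), 0 ≤ t → h' x ≤ ht' (x, t) + K * t := by
    intro x t ht
    rcases eq_or_lt_of_le ht with h | h
    · rw [← h, mul_zero, add_zero, htrest]
    · have hne : t ≠ 0 := ne_of_gt h
      have e1 : h' x = t * h' (t⁻¹ • x) := by
        rw [← h'hom t h.le (t⁻¹ • x), smul_inv_smul₀ hne]
      have e2 : ht' (x, t) = t * ht' (t⁻¹ • x, 1) := by
        have hxt : ((x, t) : V n × ℝ) = t • ((t⁻¹ • x, 1) : V n × ℝ) := by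
          refine Prod.ext_iff.mpr ⟨?_, ?_⟩
          · show x = t • t⁻¹ • x
            rw [smul_inv_smul₀ hne]
          · show t = t * 1
            rw [mul_one]
        rw [hxt, hthom t h.le _ (by norm_num)]
      have h5 := Kbound (t⁻¹ • x)
      have h6 := mul_le_mul_of_nonneg_left h5 h.le
      rw [mul_sub] at h6
      have h7 : K * t = t * K := mul_comm _ _
      linarith [e1, e2, h6, h7]
  have Nmono : ∀ (x : V n) (t t' : ℝ), 0 ≤ t → t ≤ t' →
      ht' (x, t) + K * t ≤ ht' (x, t') + K * t' := by
    intro x t t' ht htt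
    rcases eq_or_lt_of_le htt with h | h
    · rw [h]
    · have ht'pos : 0 < t' := lt_of_le_of_lt ht h
      have hne : t' ≠ 0 := ne_of_gt ht'pos
      obtain ⟨θ, hθ⟩ : ∃ x : ℝ, x = (t' - t) / t' := ⟨_, rfl⟩
      have hθ0 : 0 ≤ θ := by rw [hθ]; exact div_nonneg (by linarith) ht'pos.le
      have hθ1 : 1 - θ = t / t' := by rw [hθ]; field_simp; ring
      have h1θ0 : 0 ≤ 1 - θ := by rw [hθ1]; positivity
      have hcomb := htconv.2
        (show ((x, 0) : V n × ℝ) ∈ {p : V n × ℝ | 0 ≤ p.2} from le_refl (0:ℝ))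
        (show ((x, t') : V n × ℝ) ∈ {p : V n × ℝ | 0 ≤ p.2} from ht'pos.le)
        hθ0 h1θ0 (by ring)
      have hpt : θ • ((x, 0) : V n × ℝ) + (1 - θ) • ((x, t') : V n × ℝ) = (x, t) := by
        refine Prod.ext_iff.mpr ⟨?_, ?_⟩
        · show θ • x + (1 - θ) • x = x
          rw [← add_smul]
          have hone : θ + (1 - θ) = 1 := by ring
          rw [hone, one_smul]
        · show θ * 0 + (1 - θ) * t' = t
          rw [hθ1, mul_zero, zero_add]
          field_simp
      rw [hpt, htrest] at hcomb
      simp only [smul_eq_mul] at hcomb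
      have hkk := Kkey x t' ht'pos.le
      have h2 := mul_le_mul_of_nonneg_left hkk hθ0
      rw [mul_add] at h2
      have hθt' : θ * t' = t' - t := by rw [hθ]; field_simp
      have hθt : θ * (K * t') = K * (t' - t) := by rw [← hθt']; ring
      have h6 : θ * ht' (x, t') + (1 - θ) * ht' (x, t') = ht' (x, t') := by ring
      have h7 : K * (t' - t) = K * t' - K * t := by ring
      linarith [hcomb, h2, hθt, h6, h7]
  -- the sublinear extension N of ht' to all of V n × ℝ
  obtain ⟨N, hN⟩ : ∃ N : V n × ℝ → ℝ,
      ∀ (x : V n) (t : ℝ), N (x, t) = ht' (x, max t 0) + K * max (-t) 0 :=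
    ⟨fun q => ht' (q.1, max q.2 0) + K * max (-q.2) 0, fun _ _ => rfl⟩
  have hNq : ∀ q : V n × ℝ, N q = ht' (q.1, max q.2 0) + K * max (-q.2) 0 := by
    intro q
    have := hN q.1 q.2
    rwa [Prod.mk.eta] at this
  have hNH : ∀ q : V n × ℝ, 0 ≤ q.2 → N q = ht' q := by
    intro q hq
    have h1 : max q.2 0 = q.2 := max_eq_left hq
    have h2 : max (-q.2) 0 = 0 := max_eq_right (by linarith)
    rw [hNq q, h1, h2, mul_zero, add_zero, Prod.mk.eta]
  have hNzero : N 0 = 0 := by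
    rw [hNH 0 (le_refl (0:ℝ))]; exact htzero
  have hNhom : ∀ c : ℝ, 0 < c → ∀ q, N (c • q) = c * N q := by
    intro c hc q
    have hcq : (c • q : V n × ℝ) = ((c • q.1 : V n), c * q.2) := rfl
    have h1 : max (c * q.2) 0 = c * max q.2 0 := by
      rw [mul_max_of_nonneg _ _ hc.le, mul_zero]
    have h2 : max (-(c * q.2)) 0 = c * max (-q.2) 0 := by
      rw [mul_max_of_nonneg _ _ hc.le, mul_zero, mul_neg]
    rw [hcq, hN, hNq q, h1, h2]
    have h3 : ((c • q.1, c * max q.2 0) : V n × ℝ) = c • ((q.1, max q.2 0) : V n × ℝ) := rfl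
    rw [h3, hthom c hc.le _ (by simpa using le_max_right q.2 0)]
    ring
  have hNconv2 : ∀ a b : V n × ℝ,
      N ((1/2 : ℝ) • a + (1/2 : ℝ) • b) ≤ (1/2) * N a + (1/2) * N b := by
    intro a b
    obtain ⟨z, hz⟩ : ∃ z : V n, z = (1/2 : ℝ) • a.1 + (1/2 : ℝ) • b.1 := ⟨_, rfl⟩
    obtain ⟨s, hs⟩ : ∃ x : ℝ, x = (1/2 : ℝ) * a.2 + (1/2 : ℝ) * b.2 := ⟨_, rfl⟩
    obtain ⟨bb, hbb⟩ : ∃ x : ℝ, x = (1/2 : ℝ) * max a.2 0 + (1/2 : ℝ) * max b.2 0 := ⟨_, rfl⟩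
    have hcoord : ((1/2 : ℝ) • a + (1/2 : ℝ) • b) = ((z, s) : V n × ℝ) := by
      rw [hz, hs]; rfl
    have hsle : s ≤ bb := by
      have h1 := le_max_left a.2 (0:ℝ)
      have h2 := le_max_left b.2 (0:ℝ)
      rw [hs, hbb]
      linarith
    have hbb0 : 0 ≤ bb := by
      have h1 := le_max_right a.2 (0:ℝ)
      have h2 := le_max_right b.2 (0:ℝ)
      rw [hbb]
      linarith
    have h1 : max s 0 ≤ bb := max_le hsle hbb0
    have h2 : (0:ℝ) ≤ max s 0 := le_max_right _ _
    have hmono := Nmono z (max s 0) bb h2 h1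
    have hconv := htconv.2
      (show ((a.1, max a.2 0) : V n × ℝ) ∈ {p : V n × ℝ | 0 ≤ p.2} from le_max_right a.2 (0:ℝ))
      (show ((b.1, max b.2 0) : V n × ℝ) ∈ {p : V n × ℝ | 0 ≤ p.2} from le_max_right b.2 (0:ℝ))
      (by norm_num : (0:ℝ) ≤ 1/2) (by norm_num : (0:ℝ) ≤ 1/2) (by norm_num)
    have hpt : (1/2 : ℝ) • ((a.1, max a.2 0) : V n × ℝ)
        + (1/2 : ℝ) • ((b.1, max b.2 0) : V n × ℝ) = ((z, bb) : V n × ℝ) := by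
      rw [hz, hbb]; rfl
    rw [hpt] at hconv
    simp only [smul_eq_mul] at hconv
    have ia := max_zero_sub_max_neg_zero_eq_self a.2
    have ib := max_zero_sub_max_neg_zero_eq_self b.2
    have is := max_zero_sub_max_neg_zero_eq_self s
    have hNc : N ((1/2 : ℝ) • a + (1/2 : ℝ) • b) = ht' (z, max s 0) + K * max (-s) 0 := by
      rw [hcoord, hN]
    have hNa : N a = ht' (a.1, max a.2 0) + K * max (-a.2) 0 := hNq a
    have hNb : N b = ht' (b.1, max b.2 0) + K * max (-b.2) 0 := hNq b
    rw [hNc, hNa, hNb]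
    have e1 : K * max (-s) 0 = K * max s 0 - K * s := by
      rw [show max (-s) 0 = max s 0 - s by linarith [is]]
      ring
    have e2 : K * max (-a.2) 0 = K * max a.2 0 - K * a.2 := by
      rw [show max (-a.2) 0 = max a.2 0 - a.2 by linarith [ia]]
      ring
    have e3 : K * max (-b.2) 0 = K * max b.2 0 - K * b.2 := by
      rw [show max (-b.2) 0 = max b.2 0 - b.2 by linarith [ib]]
      ring
    have e4 : K * bb = (1/2) * (K * max a.2 0) + (1/2) * (K * max b.2 0) := by
      rw [hbb]; ring
    have e5 : K * s = (1/2) * (K * a.2) + (1/2) * (K * b.2) := by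
      rw [hs]; ring
    linarith [hmono, hconv, e1, e2, e3, e4, e5]
  have hNsub : ∀ a b : V n × ℝ, N (a + b) ≤ N a + N b := by
    intro a b
    have h2 := hNconv2 a b
    rw [← smul_add] at h2
    have h3 : N ((1/2 : ℝ) • (a + b)) = (1/2) * N (a + b) := hNhom (1/2) (by norm_num) _
    rw [h3] at h2
    linarith
  -- pick a base point for Hahn-Banach
  obtain ⟨p₀, hp₀ne, hp₀2, hp₀p⟩ :
      ∃ p₀ : V n × ℝ, p₀ ≠ 0 ∧ 0 ≤ p₀.2 ∧
        ∀ g : (V n × ℝ) →ₗ[ℝ] ℝ, g p₀ = ht' p₀ → g p = ht' p := by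
    by_cases hp0 : p = 0
    · refine ⟨((0 : V n), (1 : ℝ)), ?_, by norm_num, ?_⟩
      · intro h
        have := congrArg Prod.snd h
        simp at this
      · intro g _
        rw [hp0, map_zero, htzero]
    · exact ⟨p, hp0, hp2, fun g h => h⟩
  -- Hahn-Banach
  have hfle : ∀ x : (LinearPMap.mkSpanSingleton (K := ℝ) (L := ℝ) (σ := RingHom.id ℝ) p₀ (ht' p₀) hp₀ne).domain,
      (LinearPMap.mkSpanSingleton (K := ℝ) (L := ℝ) (σ := RingHom.id ℝ) p₀ (ht' p₀) hp₀ne) x ≤ N x := by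
    rintro ⟨x, hx⟩
    obtain ⟨cc, rfl⟩ := Submodule.mem_span_singleton.mp hx
    have happ : (LinearPMap.mkSpanSingleton (K := ℝ) (L := ℝ) (σ := RingHom.id ℝ) p₀ (ht' p₀) hp₀ne) ⟨cc • p₀, hx⟩
        = cc • ht' p₀ := LinearPMap.mkSpanSingleton'_apply _ _ _ cc hx
    rw [happ]
    simp only [smul_eq_mul]
    rcases lt_trichotomy cc 0 with hc | hc | hc
    · have key := hNsub (cc • p₀) ((-cc) • p₀)
      have hzero : cc • p₀ + (-cc) • p₀ = 0 := by
        rw [← add_smul]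
        simp
      rw [hzero, hNzero] at key
      have h4 : N ((-cc) • p₀) = (-cc) * N p₀ := hNhom (-cc) (by linarith) p₀
      rw [h4, hNH p₀ hp₀2] at key
      linarith
    · rw [hc]
      simp [hNzero]
    · rw [hNhom cc hc, hNH p₀ hp₀2]
  obtain ⟨g, hg1, hg2⟩ := exists_extension_of_le_sublinear
    (LinearPMap.mkSpanSingleton (K := ℝ) (L := ℝ) (σ := RingHom.id ℝ) p₀ (ht' p₀) hp₀ne) N hNhom hNsub hfle
  have hgp₀ : g p₀ = ht' p₀ := by
    have h1 := hg1 ⟨p₀, Submodule.mem_span_singleton_self p₀⟩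
    rw [h1, LinearPMap.mkSpanSingleton_apply]
  have hgle : ∀ q : V n × ℝ, 0 ≤ q.2 → g q ≤ ht' q :=
    fun q hq => (hg2 q).trans_eq (hNH q hq)
  -- representation of g via a vector w
  obtain ⟨w, hgw⟩ : ∃ w : V n × ℝ, ∀ q : V n × ℝ, g q = pairP q w := by
    refine ⟨((fun i => g ((Pi.single i 1 : V n), (0:ℝ))), g ((0 : V n), (1:ℝ))), ?_⟩
    intro q
    have hq : q = (∑ i, q.1 i • (((Pi.single i 1 : V n), (0:ℝ)) : V n × ℝ))
        + q.2 • (((0 : V n), (1:ℝ)) : V n × ℝ) := by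
      refine Prod.ext_iff.mpr ⟨?_, ?_⟩
      · rw [Prod.fst_add, Prod.fst_sum]
        have : ∀ i, (q.1 i • (((Pi.single i 1 : V n), (0:ℝ)) : V n × ℝ)).1
            = (Pi.single i (q.1 i) : V n) := by
          intro i
          rw [single_eq_smul i (q.1 i)]
          rfl
        rw [Finset.sum_congr rfl (fun i _ => this i), Finset.univ_sum_single]
        show q.1 = q.1 + q.2 • (0 : V n)
        rw [smul_zero, add_zero]
      · rw [Prod.snd_add, Prod.snd_sum]
        have : ∀ i, (q.1 i • (((Pi.single i 1 : V n), (0:ℝ)) : V n × ℝ)).2 = 0 := by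
          intro i
          show q.1 i * 0 = 0
          rw [mul_zero]
        rw [Finset.sum_congr rfl (fun i _ => this i), Finset.sum_const_zero]
        show q.2 = 0 + q.2 * 1
        rw [zero_add, mul_one]
    calc g q = g ((∑ i, q.1 i • (((Pi.single i 1 : V n), (0:ℝ)) : V n × ℝ))
        + q.2 • (((0 : V n), (1:ℝ)) : V n × ℝ)) := by rw [← hq]
      _ = (∑ i, q.1 i * g (((Pi.single i 1 : V n), (0:ℝ)) : V n × ℝ))
          + q.2 * g (((0 : V n), (1:ℝ)) : V n × ℝ) := by
        rw [map_add, map_sum, map_smul]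
        simp only [map_smul, smul_eq_mul]
      _ = pairP q ((fun i => g ((Pi.single i 1 : V n), (0:ℝ))), g ((0 : V n), (1:ℝ))) := rfl
  have hg1le : ∀ u : V n, pair u w.1 + w.2 ≤ ht' (u, 1) := by
    intro u
    have := hgle (u, 1) (by norm_num)
    rw [hgw] at this
    simpa [pairP] using this
  have hmD : (-w.1) ∈ Dh' := by
    rw [hDh']
    intro x
    have h1 := hgle (x, 0) le_rfl
    rw [hgw, htrest] at h1
    have h2 : pairP ((x, 0) : V n × ℝ) w = pair x w.1 := by
      simp [pairP]
    rw [h2] at h1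
    rw [pair_neg_left, pair_comm]
    linarith
  -- membership facts for Ntil and Ntil'
  have hNtil0 : (((0 : V n), (0:ℝ)) : V n × ℝ) ∈ Ntil := by
    rw [hNtil]
    constructor
    · show (0 : V n) ∈ ∑ i, Nb i
      have hz : ∀ i ∈ Finset.univ, (0 : V n) ∈ Nb i := by
        intro i _
        rw [hNb i]
        exact subset_convexHull ℝ _ (Or.inl rfl)
      have := Set.finset_sum_mem_finset_sum Finset.univ Nb (fun _ => (0 : V n)) hz
      rwa [Finset.sum_const_zero] at this
    · show h' (0 : V n) ≤ 0
      rw [h'zero]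
  have hNtil'mem : ∀ q ∈ Q, ((q, ht' (q, 1)) : V n × ℝ) ∈ Ntil' := by
    intro q hq
    rw [hNtil']
    exact ⟨hq, le_rfl⟩
  have hNtilbdd : ∀ m' ∈ Dh', ∀ y ∈ (fun q => -(pairP q (m', 1))) '' Ntil, y ≤ 0 := by
    rintro m' hm' y ⟨a, haN, rfl⟩
    rw [hNtil] at haN
    obtain ⟨_, ha2⟩ := haN
    have h1 := hDmem m' hm' a.1
    have hc : pair a.1 m' = pair m' a.1 := pair_comm _ _
    show -(pair a.1 m' + a.2 * 1) ≤ 0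
    rw [mul_one]
    linarith
  have hNtilBdd : ∀ m' ∈ Dh', BddAbove ((fun q => -(pairP q (m', 1))) '' Ntil) :=
    fun m' hm' => ⟨0, fun y hy => hNtilbdd m' hm' y hy⟩
  have hNtilne : ∀ m' : V n, ((fun q => -(pairP q (m', 1))) '' Ntil).Nonempty :=
    fun m' => ⟨_, Set.mem_image_of_mem _ hNtil0⟩
  have hsuppNtil_le : ∀ m' ∈ Dh', suppP Ntil (m', 1) ≤ 0 :=
    fun m' hm' => csSup_le (hNtilne m') (hNtilbdd m' hm')
  have hNN'bdd : ∀ m' ∈ Dh', ∀ y ∈ (fun q => -(pairP q (m', 1))) '' (Ntil + Ntil'),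
      y ≤ 2 * SRB - C := by
    rintro m' hm' y ⟨a, haNN, rfl⟩
    rw [Set.mem_add] at haNN
    obtain ⟨a₁, ha₁, a₂, ha₂, rfl⟩ := haNN
    have h1 : -(pairP a₁ (m', 1)) ≤ 0 := hNtilbdd m' hm' _ (Set.mem_image_of_mem _ ha₁)
    rw [hNtil'] at ha₂
    obtain ⟨ha₂Q, ha₂2⟩ := ha₂
    have hb := hpairQ m' hm' a₂.1 ha₂Q
    have hg1l := g1lower a₂.1
    have hh := (h'Q a₂.1 ha₂Q).2
    have hcm : pair a₂.1 m' = pair m' a₂.1 := pair_comm _ _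
    have habs := abs_le.mp hb
    have h2 : -(pairP a₂ (m', 1)) ≤ 2 * SRB - C := by
      show -(pair a₂.1 m' + a₂.2 * 1) ≤ 2 * SRB - C
      rw [mul_one]
      linarith
    show -(pairP (a₁ + a₂) ((m', 1) : V n × ℝ)) ≤ 2 * SRB - C
    rw [pairP_add_left]
    linarith
  have hNN'Bdd : ∀ m' ∈ Dh', BddAbove ((fun q => -(pairP q (m', 1))) '' (Ntil + Ntil')) :=
    fun m' hm' => ⟨2 * SRB - C, fun y hy => hNN'bdd m' hm' y hy⟩
  -- uniform lower bound for htc'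
  have hL : ∀ m' ∈ Dh', -SRB - ht' (n₀, 1) ≤ htc' (m', 1) := by
    intro m' hm'
    have helem : (((0 : V n), (0:ℝ)) : V n × ℝ) + ((n₀, ht' (n₀, 1)) : V n × ℝ) ∈ Ntil + Ntil' :=
      Set.add_mem_add hNtil0 (hNtil'mem n₀ hn₀)
    have h1 : -(pairP ((((0 : V n), (0:ℝ)) : V n × ℝ) + ((n₀, ht' (n₀, 1)) : V n × ℝ)) (m', 1))
        ≤ suppP (Ntil + Ntil') (m', 1) :=
      le_csSup (hNN'Bdd m' hm') (Set.mem_image_of_mem _ helem)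
    have h2 : pairP ((((0 : V n), (0:ℝ)) : V n × ℝ) + ((n₀, ht' (n₀, 1)) : V n × ℝ)) (m', 1)
        = pair n₀ m' + ht' (n₀, 1) := by
      rw [pairP_add_left]
      show (pair 0 m' + 0 * 1) + (pair n₀ m' + ht' (n₀, 1) * 1) = pair n₀ m' + ht' (n₀, 1)
      rw [pair_zero_left, mul_one]
      ring
    have h3 := hpairQ m' hm' n₀ hn₀
    have hcm : pair n₀ m' = pair m' n₀ := pair_comm _ _
    have habs := abs_le.mp h3
    have h4 := hsuppNtil_le m' hm'
    rw [hhtc', hhtc]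
    rw [h2] at h1
    linarith
  -- the key pointwise inequality
  have hkey : ∀ m' ∈ Dh', ∀ u : V n, -(pair m' u) - ht' (u, 1) ≤ htc' (m', 1) := by
    intro m' hm' u
    obtain ⟨z, q, hqQ, huzq, heq⟩ := decomp u
    have hstep : suppP Ntil (m', 1) ≤ suppP (Ntil + Ntil') (m', 1) + pair m' u + ht' (u, 1) := by
      refine csSup_le (hNtilne m') ?_
      rintro y ⟨a₁, ha₁, rfl⟩
      show -(pairP a₁ ((m', 1) : V n × ℝ)) ≤ suppP (Ntil + Ntil') (m', 1) + pair m' u + ht' (u, 1)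
      have helem : a₁ + ((q, ht' (q, 1)) : V n × ℝ) ∈ Ntil + Ntil' :=
        Set.add_mem_add ha₁ (hNtil'mem q hqQ)
      have h1 : -(pairP (a₁ + ((q, ht' (q, 1)) : V n × ℝ)) (m', 1))
          ≤ suppP (Ntil + Ntil') (m', 1) :=
        le_csSup (hNN'Bdd m' hm') (Set.mem_image_of_mem _ helem)
      rw [pairP_add_left] at h1
      have hz : -(pair m' z) ≤ h' z := by
        have := hDmem m' hm' z
        linarith
      have hu' : pair m' u = pair m' z + pair m' q := by
        rw [huzq, pair_add_right]
      have hq2 : pairP ((q, ht' (q, 1)) : V n × ℝ) (m', 1) = pair q m' + ht' (q, 1) := by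
        show pair q m' + ht' (q, 1) * 1 = pair q m' + ht' (q, 1)
        rw [mul_one]
      have hcm : pair q m' = pair m' q := pair_comm _ _
      rw [hq2] at h1
      linarith [h1, heq]
    rw [hhtc', hhtc]
    linarith [hstep]
  -- the witness element of Δt'
  have hwit : ((-w.1, -w.2) : V n × ℝ) ∈ Δt' := by
    rw [hΔt']
    refine ⟨hmD, ?_⟩
    show htc' (-w.1, 1) ≤ -w.2
    rw [hhtc', hhtc]
    have hsub : suppP (Ntil + Ntil') (-w.1, 1) ≤ suppP Ntil (-w.1, 1) + (-w.2) := by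
      refine csSup_le ⟨_, Set.mem_image_of_mem _
        (Set.add_mem_add hNtil0 (hNtil'mem n₀ hn₀))⟩ ?_
      rintro y ⟨a, haNN, rfl⟩
      rw [Set.mem_add] at haNN
      obtain ⟨a₁, ha₁, a₂, ha₂, rfl⟩ := haNN
      show -(pairP (a₁ + a₂) ((-w.1, 1) : V n × ℝ)) ≤ suppP Ntil (-w.1, 1) + -w.2
      rw [pairP_add_left]
      have h1 : -(pairP a₁ (-w.1, 1)) ≤ suppP Ntil (-w.1, 1) :=
        le_csSup (hNtilBdd _ hmD) (Set.mem_image_of_mem _ ha₁)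
      rw [hNtil'] at ha₂
      obtain ⟨haQ, ha2⟩ := ha₂
      have h2 := hg1le a₂.1
      have h3 : pairP a₂ ((-w.1, 1) : V n × ℝ) = pair a₂.1 (-w.1) + a₂.2 := by
        show pair a₂.1 (-w.1) + a₂.2 * 1 = pair a₂.1 (-w.1) + a₂.2
        rw [mul_one]
      have h4 : pair a₂.1 (-w.1) = -(pair a₂.1 w.1) := pair_neg_right _ _
      rw [h3, h4]
      linarith
    linarith
  -- value of the witness
  have hval : -(pairP ((-w.1, -w.2) : V n × ℝ) p) = ht' p := by
    have h1 : pairP ((-w.1, -w.2) : V n × ℝ) p = -(pairP p w) := by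
      show pair (-w.1) p.1 + (-w.2) * p.2 = -(pair p.1 w.1 + p.2 * w.2)
      rw [pair_neg_left]
      have : pair w.1 p.1 = pair p.1 w.1 := pair_comm _ _
      rw [this]
      ring
    rw [h1, neg_neg, ← hgw p]
    exact hp₀p g hgp₀
  -- bounded above
  have hbddΔ : BddAbove ((fun q => -(pairP q p)) '' Δt') := by
    refine ⟨(∑ i, |p.1 i| * B i) + (SRB + ht' (n₀, 1)) * p.2, ?_⟩
    rintro y ⟨a, haΔ, rfl⟩
    rw [hΔt'] at haΔ
    obtain ⟨haD, hal⟩ := haΔ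
    have h1 : |pair a.1 p.1| ≤ ∑ i, |p.1 i| * B i := hpairD a.1 haD p.1
    have h2 := hL a.1 haD
    have h5 : -(SRB + ht' (n₀, 1)) ≤ a.2 := by linarith [hal]
    have h5' : -a.2 ≤ SRB + ht' (n₀, 1) := by linarith
    have h6 := mul_le_mul_of_nonneg_right h5' hp2
    have habs := abs_le.mp h1
    show -(pair a.1 p.1 + a.2 * p.2) ≤ _
    have h7 : -(a.2 * p.2) = (-a.2) * p.2 := by ring
    linarith [h6, h7]
  -- upper bound for all elements
  have hub : ∀ y ∈ (fun q => -(pairP q p)) '' Δt', y ≤ ht' p := by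
    rintro y ⟨a, haΔ, rfl⟩
    rw [hΔt'] at haΔ
    obtain ⟨haD, hal⟩ := haΔ
    rcases eq_or_lt_of_le hp2 with h0 | h0
    · -- p.2 = 0
      have hp' : p = (p.1, 0) := Prod.ext_iff.mpr ⟨rfl, h0.symm⟩
      show -(pair a.1 p.1 + a.2 * p.2) ≤ ht' p
      have h2 := hDmem a.1 haD p.1
      rw [← h0, mul_zero, add_zero]
      have h3 : ht' p = h' p.1 := by rw [hp', htrest]
      rw [h3]
      linarith [h2]
    · -- p.2 > 0
      have hne : p.2 ≠ 0 := ne_of_gt h0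
      obtain ⟨u, hpu⟩ : ∃ u : V n, p.1 = p.2 • u :=
        ⟨p.2⁻¹ • p.1, (smul_inv_smul₀ hne p.1).symm⟩
      have hkey' := hkey a.1 haD u
      have h2 : -(pair a.1 u) - a.2 ≤ ht' (u, 1) := by
        linarith [hal, hkey']
      have h3 : pair a.1 p.1 = p.2 * pair a.1 u := by
        rw [hpu, pair_smul_right]
      have h4 : ht' p = p.2 * ht' (u, 1) := by
        have hxt : (p : V n × ℝ) = p.2 • ((u, 1) : V n × ℝ) := by
          refine Prod.ext_iff.mpr ⟨?_, ?_⟩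
          · exact hpu
          · show p.2 = p.2 * 1
            rw [mul_one]
        conv_lhs => rw [hxt]
        exact hthom p.2 h0.le _ (by norm_num)
      have h5 := mul_le_mul_of_nonneg_left h2 h0.le
      show -(pair a.1 p.1 + a.2 * p.2) ≤ ht' p
      have h6 : p.2 * (-(pair a.1 u) - a.2) = -(pair a.1 p.1 + a.2 * p.2) := by
        rw [h3]; ring
      linarith [h4, h5, h6]
  -- conclusion
  apply le_antisymm
  · rw [← hval]
    exact le_csSup hbddΔ (Set.mem_image_of_mem _ hwit)
  · exact csSup_le ⟨_, Set.mem_image_of_mem _ hwit⟩ hub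

end BB
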